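/- arXiv:alg-geom/9710011 — 2 statements merged into one kernel-verified Lean document; each statement's English description precedes it below -/
import Mathlib

section
/- Let k be a field, let f₁,…,f_m ∈ k[x₁,…,xₙ], let L = k[x₁,…,xₙ][t, t⁻¹] (the localization of k[x₁,…,xₙ,t] at the powers of t), and let R ⊆ L be the k[x₁,…,xₙ,t]-subalgebra of L generated by f₁/t, …, f_m/t. For each a = (a₁,…,aₙ) ∈ kⁿ, let σ_a be the k[t,t⁻¹]-algebra automorphism of L determined by σ_a(xᵢ) = xᵢ + t·aᵢ. Then: (1) σ_a(R) = R for every a ∈ kⁿ, and (2) σ_a ∘ σ_b = σ_{a+b} for all a, b ∈ kⁿ; that is, the additive group kⁿ acts on R by k[t]-algebra automorphisms. -/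
set_option synthInstance.maxHeartbeats 1000000
set_option maxHeartbeats 1000000

open Polynomial MvPolynomial

/-- The Laurent polynomial ring `L = k[x₁,…,xₙ][t,t⁻¹]`, realized as the localization of
`k[x₁,…,xₙ][t]` away from `t`. -/
abbrev DefToNormalCone.L (k : Type) [Field k] (n : ℕ) : Type :=
  Localization.Away (Polynomial.X : Polynomial (MvPolynomial (Fin n) k))

namespace DefToNormalCone

variable (k : Type) [Field k] (n : ℕ)

/-- The image of `t` in `L`. -/
noncomputable def t : L k n :=
  algebraMap (Polynomial (MvPolynomial (Fin n) k)) (L k n) Polynomial.X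

/-- The image of the variable `xᵢ` in `L`. -/
noncomputable def x (i : Fin n) : L k n :=
  algebraMap (Polynomial (MvPolynomial (Fin n) k)) (L k n)
    (Polynomial.C (MvPolynomial.X i))

/-- The element `fⱼ/t = fⱼ·t⁻¹` of `L`. -/
noncomputable def fDivT (f : MvPolynomial (Fin n) k) : L k n :=
  algebraMap (Polynomial (MvPolynomial (Fin n) k)) (L k n) (Polynomial.C f) *
    IsLocalization.Away.invSelf (S := L k n)
      (Polynomial.X : Polynomial (MvPolynomial (Fin n) k))

/-- The `k[x₁,…,xₙ,t]`-subalgebra `R = k[x₁,…,xₙ,t][f₁/t,…,f_m/t]` of `L`. -/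
noncomputable def R (m : ℕ) (f : Fin m → MvPolynomial (Fin n) k) :
    Subalgebra (Polynomial (MvPolynomial (Fin n) k)) (L k n) :=
  Algebra.adjoin _ {y : L k n | ∃ j : Fin m, y = fDivT k n (f j)}

/-- `σ` is "the" automorphism `σ_a` of `L`: a `k[t,t⁻¹]`-algebra automorphism of `L`
(i.e. a `k`-algebra automorphism fixing `t`, hence also `t⁻¹`) with `σ(xᵢ) = xᵢ + t·aᵢ`. -/
def IsSigma (a : Fin n → k) (σ : L k n ≃ₐ[k] L k n) : Prop :=
  σ (t k n) = t k n ∧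
    ∀ i : Fin n, σ (x k n i) = x k n i + t k n * algebraMap k (L k n) (a i)

end DefToNormalCone

namespace DefToNormalCone

variable (k : Type) [Field k] (n : ℕ)

/-- Abbreviation for the polynomial ring `k[x₁,…,xₙ][t]`. -/
abbrev PP := Polynomial (MvPolynomial (Fin n) k)

/-- The substitution endomorphism `xᵢ ↦ xᵢ + t·aᵢ`, `t ↦ t` of `k[x₁,…,xₙ][t]`. -/
noncomputable def phi (a : Fin n → k) : PP k n →ₐ[k] PP k n :=
  Polynomial.aevalTower
    (MvPolynomial.aeval fun i =>
      Polynomial.C (MvPolynomial.X i) + Polynomial.X * Polynomial.C (MvPolynomial.C (a i)))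
    Polynomial.X

@[simp] lemma phi_X (a : Fin n → k) : phi k n a Polynomial.X = Polynomial.X :=
  Polynomial.aevalTower_X _ _

@[simp] lemma phi_CX (a : Fin n → k) (i : Fin n) :
    phi k n a (Polynomial.C (MvPolynomial.X i)) =
      Polynomial.C (MvPolynomial.X i) + Polynomial.X * Polynomial.C (MvPolynomial.C (a i)) := by
  rw [phi, Polynomial.aevalTower_C, MvPolynomial.aeval_X]

@[simp] lemma phi_CC (a : Fin n → k) (c : k) :
    phi k n a (Polynomial.C (MvPolynomial.C c)) = Polynomial.C (MvPolynomial.C c) := by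
  have := (phi k n a).commutes c
  simpa [MvPolynomial.algebraMap_eq, Polynomial.algebraMap_apply] using this

lemma phi_comp (a b : Fin n → k) : (phi k n a).comp (phi k n b) = phi k n (a + b) := by
  apply Polynomial.algHom_ext'
  · apply MvPolynomial.algHom_ext
    intro i
    show phi k n a (phi k n b (Polynomial.C (MvPolynomial.X i))) = _
    rw [phi_CX, map_add, map_mul, phi_CX, phi_X, phi_CC]
    show _ = phi k n (a + b) (Polynomial.C (MvPolynomial.X i))
    rw [phi_CX]
    simp only [Pi.add_apply, map_add]
    ring
  · show phi k n a (phi k n b Polynomial.X) = phi k n (a + b) Polynomial.X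
    rw [phi_X, phi_X, phi_X]

lemma phi_zero : phi k n 0 = AlgHom.id k (PP k n) := by
  apply Polynomial.algHom_ext'
  · apply MvPolynomial.algHom_ext
    intro i
    show phi k n 0 (Polynomial.C (MvPolynomial.X i)) = _
    rw [phi_CX]; simp
  · show phi k n 0 Polynomial.X = _
    rw [phi_X]; rfl

/-- `phi a` modifies a constant polynomial by a multiple of `t`. -/
lemma phi_C_sub_dvd (a : Fin n → k) (g : MvPolynomial (Fin n) k) :
    ∃ q : PP k n, phi k n a (Polynomial.C g) = Polynomial.C g + Polynomial.X * q := by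
  have hF : ∀ p : MvPolynomial (Fin n) k,
      Polynomial.eval (0 : MvPolynomial (Fin n) k) (phi k n a (Polynomial.C p)) = p := by
    intro p
    have hhom : (Polynomial.evalRingHom (0 : MvPolynomial (Fin n) k)).comp
        ((phi k n a).toRingHom.comp (Polynomial.C.comp (RingHom.id _))) = RingHom.id _ := by
      apply MvPolynomial.ringHom_ext'
      · ext c
        simp
      · intro i
        simp
    exact congrArg (fun g : MvPolynomial (Fin n) k →+* MvPolynomial (Fin n) k => g p) hhom
  have hdvd : Polynomial.X ∣ (phi k n a (Polynomial.C g) - Polynomial.C g) := by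
    rw [Polynomial.X_dvd_iff, Polynomial.coeff_zero_eq_eval_zero]
    simp [hF g]
  obtain ⟨q, hq⟩ := hdvd
  exact ⟨q, by rw [← hq]; ring⟩

/-- The substitution automorphism of `k[x₁,…,xₙ][t]`. -/
noncomputable def phiE (a : Fin n → k) : PP k n ≃ₐ[k] PP k n :=
  AlgEquiv.ofAlgHom (phi k n a) (phi k n (-a))
    (by rw [phi_comp]; simp [phi_zero])
    (by rw [phi_comp]; simp [phi_zero])

lemma phiE_powers (a : Fin n → k) :
    (Submonoid.powers (Polynomial.X : PP k n)).map (phiE k n a).toRingEquiv.toMonoidHom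
      = Submonoid.powers (Polynomial.X : PP k n) := by
  ext y
  simp only [Submonoid.mem_map, Submonoid.mem_powers_iff]
  constructor
  · rintro ⟨z, ⟨j, rfl⟩, rfl⟩
    exact ⟨j, by simp [phiE, map_pow]⟩
  · rintro ⟨j, rfl⟩
    exact ⟨Polynomial.X ^ j, ⟨j, rfl⟩, by simp [phiE, map_pow]⟩

noncomputable def sigmaR (a : Fin n → k) : L k n ≃+* L k n :=
  IsLocalization.ringEquivOfRingEquiv (L k n) (L k n) (phiE k n a).toRingEquiv
    (phiE_powers k n a)

lemma sigmaR_algebraMap (a : Fin n → k) (p : PP k n) :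
    sigmaR k n a (algebraMap (PP k n) (L k n) p) =
      algebraMap (PP k n) (L k n) (phi k n a p) :=
  IsLocalization.ringEquivOfRingEquiv_eq _ _

/-- The automorphism `σ_a` of `L`. -/
noncomputable def sigma (a : Fin n → k) : L k n ≃ₐ[k] L k n :=
  { sigmaR k n a with
    commutes' := fun c => by
      have h1 : (algebraMap k (L k n)) c =
          algebraMap (PP k n) (L k n) (algebraMap k (PP k n) c) :=
        (IsScalarTower.algebraMap_apply k (PP k n) (L k n) c)
      show sigmaR k n a _ = _
      rw [h1, sigmaR_algebraMap, (phi k n a).commutes] }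

lemma sigma_algebraMap (a : Fin n → k) (p : PP k n) :
    sigma k n a (algebraMap (PP k n) (L k n) p) =
      algebraMap (PP k n) (L k n) (phi k n a p) :=
  sigmaR_algebraMap k n a p

lemma ckc (c : k) :
    algebraMap (PP k n) (L k n) (Polynomial.C (MvPolynomial.C c)) = algebraMap k (L k n) c := by
  rw [IsScalarTower.algebraMap_apply k (PP k n) (L k n) c, Polynomial.algebraMap_apply,
    MvPolynomial.algebraMap_eq]

lemma isSigma_sigma (a : Fin n → k) : IsSigma k n a (sigma k n a) := by
  constructor
  · rw [t, sigma_algebraMap, phi_X]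
  · intro i
    rw [x, sigma_algebraMap, phi_CX, map_add, map_mul, ckc, t]

lemma sigma_unique (a : Fin n → k) (σ σ' : L k n ≃ₐ[k] L k n)
    (h : IsSigma k n a σ) (h' : IsSigma k n a σ') : σ = σ' := by
  suffices hh : (σ : L k n →+* L k n) = (σ' : L k n →+* L k n) by
    ext y
    exact congrArg (fun g : L k n →+* L k n => g y) hh
  apply IsLocalization.ringHom_ext (Submonoid.powers (Polynomial.X : PP k n))
  apply Polynomial.ringHom_ext'
  · apply MvPolynomial.ringHom_ext'
    · ext c
      show σ (algebraMap (PP k n) (L k n) (Polynomial.C (MvPolynomial.C c))) = σ' _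
      rw [ckc]
      rw [show algebraMap k (L k n) c = (algebraMap k (L k n)) c from rfl]
      rw [σ.commutes, σ'.commutes]
    · intro i
      show σ (algebraMap (PP k n) (L k n) (Polynomial.C (MvPolynomial.X i))) = σ' _
      rw [show algebraMap (PP k n) (L k n) (Polynomial.C (MvPolynomial.X i)) = x k n i from rfl,
        h.2 i, h'.2 i]
  · show σ (algebraMap (PP k n) (L k n) Polynomial.X) = σ' _
    rw [show algebraMap (PP k n) (L k n) Polynomial.X = t k n from rfl, h.1, h'.1]

lemma isSigma_symm (a : Fin n → k) (σ : L k n ≃ₐ[k] L k n) (h : IsSigma k n a σ) :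
    IsSigma k n (-a) σ.symm := by
  constructor
  · have := congrArg σ.symm h.1
    rw [σ.symm_apply_apply] at this
    exact this.symm
  · intro i
    have key : σ (x k n i - t k n * algebraMap k (L k n) (a i)) = x k n i := by
      rw [map_sub, h.2 i, map_mul, h.1]
      have : σ (algebraMap k (L k n) (a i)) = algebraMap k (L k n) (a i) := σ.commutes (a i)
      rw [this]; ring
    have := congrArg σ.symm key
    rw [σ.symm_apply_apply] at this
    rw [← this]
    simp only [Pi.neg_apply, map_neg]
    ring

lemma isSigma_trans (a b : Fin n → k) (σ τ : L k n ≃ₐ[k] L k n)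
    (ha : IsSigma k n a σ) (hb : IsSigma k n b τ) : IsSigma k n (a + b) (τ.trans σ) := by
  constructor
  · show σ (τ (t k n)) = t k n
    rw [hb.1, ha.1]
  · intro i
    show σ (τ (x k n i)) = _
    rw [hb.2 i, map_add, ha.2 i, map_mul, ha.1]
    have : σ (algebraMap k (L k n) (b i)) = algebraMap k (L k n) (b i) := σ.commutes (b i)
    rw [this]
    simp only [Pi.add_apply, map_add]
    ring

lemma sigma_mem_R (m : ℕ) (f : Fin m → MvPolynomial (Fin n) k) (a : Fin n → k)
    (y : L k n) (hy : y ∈ R k n m f) : sigma k n a y ∈ R k n m f := by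
  induction hy using Algebra.adjoin_induction with
  | mem z hz =>
      obtain ⟨j, rfl⟩ := hz
      obtain ⟨q, hq⟩ := phi_C_sub_dvd k n a (f j)
      have h1 : sigma k n a (fDivT k n (f j)) = fDivT k n (f j) +
          algebraMap (PP k n) (L k n) q := by
        simp only [fDivT]
        rw [map_mul, sigma_algebraMap, hq]
        have hinv : sigma k n a (IsLocalization.Away.invSelf (S := L k n)
            (Polynomial.X : PP k n)) = IsLocalization.Away.invSelf (S := L k n)
            (Polynomial.X : PP k n) := by
          have h2 : algebraMap (PP k n) (L k n) Polynomial.X *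
              IsLocalization.Away.invSelf (S := L k n) (Polynomial.X : PP k n) = 1 :=
            IsLocalization.Away.mul_invSelf _
          have h3 := congrArg (sigma k n a) h2
          rw [map_mul, map_one, sigma_algebraMap, phi_X] at h3
          calc sigma k n a (IsLocalization.Away.invSelf (S := L k n) (Polynomial.X : PP k n))
              = (algebraMap (PP k n) (L k n) Polynomial.X *
                IsLocalization.Away.invSelf (S := L k n) (Polynomial.X : PP k n)) *
                sigma k n a (IsLocalization.Away.invSelf (S := L k n)
                  (Polynomial.X : PP k n)) := by rw [h2]; ring
            _ = (algebraMap (PP k n) (L k n) Polynomial.X *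
                sigma k n a (IsLocalization.Away.invSelf (S := L k n) (Polynomial.X : PP k n))) *
                IsLocalization.Away.invSelf (S := L k n) (Polynomial.X : PP k n) := by ring
            _ = _ := by rw [h3]; ring
        rw [hinv, map_add, map_mul]
        calc (algebraMap (PP k n) (L k n) (Polynomial.C (f j)) +
              algebraMap (PP k n) (L k n) Polynomial.X * algebraMap (PP k n) (L k n) q) *
              IsLocalization.Away.invSelf (S := L k n) (Polynomial.X : PP k n)
            = algebraMap (PP k n) (L k n) (Polynomial.C (f j)) *
              IsLocalization.Away.invSelf (S := L k n) (Polynomial.X : PP k n) +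
              (algebraMap (PP k n) (L k n) Polynomial.X *
                IsLocalization.Away.invSelf (S := L k n) (Polynomial.X : PP k n)) *
              algebraMap (PP k n) (L k n) q := by ring
          _ = _ := by rw [IsLocalization.Away.mul_invSelf]; ring
      rw [h1]
      exact add_mem (Algebra.subset_adjoin ⟨j, rfl⟩)
        ((R k n m f).algebraMap_mem q)
  | algebraMap p =>
      rw [sigma_algebraMap]
      exact (R k n m f).algebraMap_mem _
  | add z w _ _ hz hw => rw [map_add]; exact add_mem hz hw
  | mul z w _ _ hz hw => rw [map_mul]; exact mul_mem hz hw

end DefToNormalCone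

open DefToNormalCone in
/-- For each `a ∈ kⁿ` there is a unique `k[t,t⁻¹]`-algebra automorphism
`σ_a` of `L = k[x₁,…,xₙ][t,t⁻¹]` with `σ_a(xᵢ) = xᵢ + t·aᵢ`; moreover
(1) `σ_a(R) = R` where `R = k[x₁,…,xₙ,t][f₁/t,…,f_m/t]`, and
(2) `σ_a ∘ σ_b = σ_{a+b}`, so the additive group `kⁿ` acts on `R` by `k[t]`-algebra
automorphisms. -/
theorem sigma_preserves_R_and_is_group_action
    (k : Type) [Field k] (n m : ℕ) (f : Fin m → MvPolynomial (Fin n) k) :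
    (∀ a : Fin n → k, ∃! σ : L k n ≃ₐ[k] L k n, IsSigma k n a σ) ∧
    (∀ (a : Fin n → k) (σ : L k n ≃ₐ[k] L k n), IsSigma k n a σ →
      σ '' (R k n m f : Set (L k n)) = (R k n m f : Set (L k n))) ∧
    (∀ (a b : Fin n → k) (σ τ ρ : L k n ≃ₐ[k] L k n),
      IsSigma k n a σ → IsSigma k n b τ → IsSigma k n (a + b) ρ →
      ∀ y : L k n, σ (τ y) = ρ y) := by
  refine ⟨?_, ?_, ?_⟩
  · intro a
    exact ⟨sigma k n a, isSigma_sigma k n a,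
      fun σ hσ => sigma_unique k n a σ (sigma k n a) hσ (isSigma_sigma k n a)⟩
  · intro a σ hσ
    have hσ' : σ = sigma k n a := sigma_unique k n a σ (sigma k n a) hσ (isSigma_sigma k n a)
    have hsymm : σ.symm = sigma k n (-a) :=
      sigma_unique k n (-a) σ.symm (sigma k n (-a)) (isSigma_symm k n a σ hσ)
        (isSigma_sigma k n (-a))
    ext y
    constructor
    · rintro ⟨z, hz, rfl⟩
      rw [hσ']
      exact sigma_mem_R k n m f a z hz
    · intro hy
      refine ⟨σ.symm y, ?_, σ.apply_symm_apply y⟩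
      rw [hsymm]
      exact sigma_mem_R k n m f (-a) y hy
  · intro a b σ τ ρ ha hb hab y
    have : τ.trans σ = ρ :=
      sigma_unique k n (a + b) (τ.trans σ) ρ (isSigma_trans k n a b σ τ ha hb) hab
    exact congrArg (fun g : L k n ≃ₐ[k] L k n => g y) this
end

section
/- Let k be a field, let A be a finite type k-algebra, let p be a maximal ideal of A, and let B → A be a k-algebra homomorphism with q the contraction of p to B. Assume the residue field extension B/q → A/p is separable. Let k' be the separable closure of k in A/p (the subfield of all elements of A/p separable over k). Then the k'-algebra homomorphism B ⊗_k k' → A/p, induced by the composite B → A → A/p and the inclusion k' ⊆ A/p, is surjective; in particular, the base change B ⊗_k k' → A ⊗_k k' admits a maximal ideal p' of A ⊗_k k' lying over p at which the induced residue field extension is an isomorphism. -/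
open TensorProduct

set_option maxHeartbeats 1000000
set_option synthInstance.maxHeartbeats 400000

/-- Let `k` be a field, `A` a finite type `k`-algebra, `p` a maximal ideal
of `A`, and `f : B → A` a `k`-algebra homomorphism with `q = f⁻¹(p)`. Assume the residue
field extension `B/q → A/p` is separable. Let `k'` be the separable closure of `k` in `A/p`.
Then the induced map `B ⊗_k k' → A/p` is surjective; in particular there is a maximal ideal
`p'` of `A ⊗_k k'` lying over `p` at which the residue field extension induced by
`B ⊗_k k' → A ⊗_k k'` is an isomorphism. -/
theorem tensor_separableClosure_surjective
    (k : Type*) [Field k] (A B : Type*) [CommRing A] [CommRing B]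
    [Algebra k A] [Algebra k B] [Algebra.FiniteType k A]
    (f : B →ₐ[k] A) (p : Ideal A) [p.IsMaximal]
    (hsep : @Algebra.IsSeparable (B ⧸ p.comap f.toRingHom) (A ⧸ p) _ _
      (Ideal.quotientMap p f.toRingHom le_rfl).toAlgebra) :
    letI : Field (A ⧸ p) := Ideal.Quotient.field p
    letI k' : IntermediateField k (A ⧸ p) := separableClosure k (A ⧸ p)
    Function.Surjective
      (Algebra.TensorProduct.productMap ((Ideal.Quotient.mkₐ k p).comp f) k'.val) ∧
    ∃ p' : Ideal (A ⊗[k] k'), p'.IsMaximal ∧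
      p'.comap (Algebra.TensorProduct.includeLeft (R := k) (S := k) (A := A) (B := k')).toRingHom = p ∧
      Function.Bijective
        (Ideal.quotientMap p'
          (Algebra.TensorProduct.map f (AlgHom.id k k')).toRingHom le_rfl) := by
  letI : Field (A ⧸ p) := Ideal.Quotient.field p
  set k' : IntermediateField k (A ⧸ p) := separableClosure k (A ⧸ p) with hk'
  set g : B →ₐ[k] (A ⧸ p) := (Ideal.Quotient.mkₐ k p).comp f with hg
  set q : Ideal B := p.comap f.toRingHom with hq
  -- (A ⧸ p) is a finite extension of k (Zariski's lemma)
  haveI : Algebra.FiniteType k (A ⧸ p) :=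
    Algebra.FiniteType.of_surjective (Ideal.Quotient.mkₐ k p)
      (Ideal.Quotient.mkₐ_surjective k p)
  haveI : Module.Finite k (A ⧸ p) := finite_of_finite_type_of_isJacobsonRing k (A ⧸ p)
  haveI : Algebra.IsAlgebraic k (A ⧸ p) := Algebra.IsAlgebraic.of_finite k (A ⧸ p)
  -- the image of `B` in `(A ⧸ p)` as an intermediate field
  have halg : (g.range : Subalgebra k (A ⧸ p)).IsAlgebraic :=
    fun x _ => Algebra.IsAlgebraic.isAlgebraic x
  set F : IntermediateField k (A ⧸ p) := halg.toIntermediateField with hF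
  have hFsub : F.toSubalgebra = g.range := rfl
  -- the quotient map `B ⧸ q → (A ⧸ p)`
  letI : Algebra (B ⧸ q) (A ⧸ p) := (Ideal.quotientMap p f.toRingHom le_rfl).toAlgebra
  haveI : Algebra.IsSeparable (B ⧸ q) (A ⧸ p) := hsep
  have hmem : ∀ x : B ⧸ q, Ideal.quotientMap p f.toRingHom le_rfl x ∈ F := by
    intro x
    obtain ⟨b, rfl⟩ := Ideal.Quotient.mk_surjective x
    rw [Ideal.quotientMap_mk]
    exact ⟨b, rfl⟩
  -- ring equivalence between `B ⧸ q` and `F`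
  set e₁ : (B ⧸ q) ≃+* F := RingEquiv.ofBijective
      ((Ideal.quotientMap p f.toRingHom le_rfl).codRestrict F.toSubfield hmem)
      (by
        constructor
        · intro x y hxy
          exact Ideal.quotientMap_injective (congrArg Subtype.val hxy)
        · rintro ⟨y, hy⟩
          obtain ⟨b, rfl⟩ := hy
          refine ⟨Ideal.Quotient.mk q b, Subtype.ext ?_⟩
          show Ideal.quotientMap p f.toRingHom le_rfl (Ideal.Quotient.mk q b) = _
          rw [Ideal.quotientMap_mk]
          rfl) with he₁
  have he₁val : ∀ x : B ⧸ q, (e₁ x : (A ⧸ p)) = Ideal.quotientMap p f.toRingHom le_rfl x :=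
    fun _ => rfl
  have hcompat : (algebraMap F (A ⧸ p)).comp (e₁ : (B ⧸ q) →+* F)
      = ((RingEquiv.refl (A ⧸ p) : (A ⧸ p) ≃+* (A ⧸ p)) : (A ⧸ p) →+* (A ⧸ p)).comp (algebraMap (B ⧸ q) (A ⧸ p)) := by
    ext x
    exact he₁val x
  -- `B ⧸ q` is a field
  haveI : q.IsMaximal := by
    refine Ideal.Quotient.maximal_of_isField _ ?_
    exact (e₁.toMulEquiv.isField (Field.toIsField F))
  letI : Field (B ⧸ q) := Ideal.Quotient.field q
  -- `(A ⧸ p)` is separable over `F`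
  haveI hFsep : Algebra.IsSeparable F (A ⧸ p) :=
    Algebra.IsSeparable.of_equiv_equiv e₁ (RingEquiv.refl (A ⧸ p)) hcompat
  -- the compositum
  set E : IntermediateField k (A ⧸ p) := F ⊔ k' with hE
  have hFE : F ≤ E := le_sup_left
  have hk'E : k' ≤ E := le_sup_right
  letI : Algebra F E := (IntermediateField.inclusion hFE).toRingHom.toAlgebra
  haveI : IsScalarTower F E (A ⧸ p) := IsScalarTower.of_algebraMap_eq (fun x => rfl)
  letI : Algebra k' E := (IntermediateField.inclusion hk'E).toRingHom.toAlgebra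
  haveI : IsScalarTower k' E (A ⧸ p) := IsScalarTower.of_algebraMap_eq (fun x => rfl)
  haveI : Algebra.IsSeparable E (A ⧸ p) := Algebra.isSeparable_tower_top_of_isSeparable F E (A ⧸ p)
  haveI : IsPurelyInseparable k' (A ⧸ p) := separableClosure.isPurelyInseparable k (A ⧸ p)
  haveI : IsPurelyInseparable E (A ⧸ p) := IsPurelyInseparable.tower_top k' E (A ⧸ p)
  -- the compositum is everything
  have hEtop : E = ⊤ := top_unique fun x _ => by
    obtain ⟨y, rfl⟩ := IsPurelyInseparable.surjective_algebraMap_of_isSeparable E (A ⧸ p) x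
    exact y.2
  -- first conjunct
  have hsurj : Function.Surjective (Algebra.TensorProduct.productMap g k'.val) := by
    rw [← AlgHom.range_eq_top, Algebra.TensorProduct.productMap_range,
      IntermediateField.range_val, ← hFsub]
    haveI : FiniteDimensional k F := FiniteDimensional.finiteDimensional_submodule
      (Subalgebra.toSubmodule F.toSubalgebra)
    rw [← IntermediateField.sup_toSubalgebra_of_left, ← hE, hEtop]
    rfl
  refine ⟨hsurj, ?_⟩
  -- the evaluation map `A ⊗ k' → (A ⧸ p)`
  set φ : A ⊗[k] k' →ₐ[k] (A ⧸ p) :=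
    Algebra.TensorProduct.productMap (Ideal.Quotient.mkₐ k p) k'.val with hφ
  have hφs : Function.Surjective φ := by
    intro x
    obtain ⟨a, rfl⟩ := Ideal.Quotient.mkₐ_surjective k p x
    exact ⟨a ⊗ₜ 1, by simp [hφ, Algebra.TensorProduct.productMap_apply_tmul]⟩
  set p' : Ideal (A ⊗[k] k') := RingHom.ker φ.toRingHom with hp'
  haveI hp'max : p'.IsMaximal := RingHom.ker_isMaximal_of_surjective φ hφs
  have hcomapp : p'.comap (Algebra.TensorProduct.includeLeft
      (R := k) (S := k) (A := A) (B := k')).toRingHom = p := by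
    have h1 : φ.comp Algebra.TensorProduct.includeLeft = Ideal.Quotient.mkₐ k p :=
      Algebra.TensorProduct.productMap_left _ _
    have : p'.comap (Algebra.TensorProduct.includeLeft
        (R := k) (S := k) (A := A) (B := k')).toRingHom
        = RingHom.ker (φ.comp Algebra.TensorProduct.includeLeft).toRingHom := rfl
    rw [this, h1]
    exact Ideal.mk_ker
  set m : A ⊗[k] k' →ₐ[k] A ⊗[k] k' := Algebra.TensorProduct.map (AlgHom.id k A) (AlgHom.id k k')
  set mf : B ⊗[k] k' →ₐ[k] A ⊗[k] k' := Algebra.TensorProduct.map f (AlgHom.id k k') with hmf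
  have hkey : φ.comp mf = Algebra.TensorProduct.productMap g k'.val := by
    apply Algebra.TensorProduct.ext
    · ext b
      simp [hφ, hmf, hg, Algebra.TensorProduct.productMap_apply_tmul]
    · ext c
      simp [hφ, hmf, Algebra.TensorProduct.productMap_apply_tmul]
  refine ⟨p', hp'max, hcomapp, Ideal.quotientMap_injective, ?_⟩
  intro y
  obtain ⟨x0, rfl⟩ := Ideal.Quotient.mk_surjective y
  obtain ⟨z, hz⟩ := hsurj (φ x0)
  have hmem2 : mf z - x0 ∈ p' := by
    rw [hp', RingHom.mem_ker, map_sub, sub_eq_zero]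
    show φ (mf z) = φ x0
    have hzz := DFunLike.congr_fun hkey z
    simp only [AlgHom.coe_comp, Function.comp_apply] at hzz
    rw [hzz, hz]
  exact ⟨Ideal.Quotient.mk _ z, (Ideal.quotientMap_mk).trans ((Ideal.Quotient.eq).mpr hmem2)⟩
end
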